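/- arXiv:1412.3874 — 2 statements merged into one kernel-verified Lean document; each statement's English description precedes it below -/
import Mathlib

section
/- Let y = α₁α₂…αₜ be a word over {a,b} with φ(y_i) ≥ 0 for every prefix y_i, where φ(a)=2, φ(b)=−2. Define w(y) = Σ_{i=1}^{t} φ(y_i). If y′ is obtained from y by deleting two letters α_i and α_j with i < j, α_i = a, α_j = b, then w(y′) ≤ w(y). -/
/-- A word over the alphabet {a,b} is a list of booleans: `true` = a, `false` = b. -/
abbrev Word := List Bool

/-- φ(a) = 2, φ(b) = -2, extended additively to words. -/
def phi (y : Word) : ℤ := (y.map (fun c => if c then (2 : ℤ) else -2)).sum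

/-- The width of a word: the sum of φ over all nonempty prefixes. -/
def wd (y : Word) : ℤ := ∑ i ∈ Finset.range y.length, phi (y.take (i + 1))

lemma phi_append (x y : Word) : phi (x ++ y) = phi x + phi y := by
  simp [phi]

lemma wd_append (x y : Word) : wd (x ++ y) = wd x + (y.length : ℤ) * phi x + wd y := by
  unfold wd
  rw [List.length_append, Finset.sum_range_add]
  have h1 : ∀ i ∈ Finset.range x.length, phi ((x ++ y).take (i+1)) = phi (x.take (i+1)) := by
    intro i hi
    rw [List.take_append, Nat.sub_eq_zero_of_le (Finset.mem_range.mp hi),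
      List.take_zero, List.append_nil]
  have h2 : ∀ i ∈ Finset.range y.length,
      phi ((x ++ y).take (x.length + i + 1)) = phi x + phi (y.take (i+1)) := by
    intro i hi
    rw [List.take_append, List.take_of_length_le (by omega),
      show x.length + i + 1 - x.length = i + 1 from by omega, phi_append]
  rw [Finset.sum_congr rfl h1]
  have : ∑ i ∈ Finset.range y.length, phi ((x ++ y).take (x.length + i + 1)) =
      ∑ i ∈ Finset.range y.length, (phi x + phi (y.take (i+1))) := Finset.sum_congr rfl h2
  rw [this, Finset.sum_add_distrib, Finset.sum_const, Finset.card_range]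
  ring

theorem type1_decreases_width (u v z : Word)
    (h : ∀ i, 0 ≤ phi ((u ++ [true] ++ v ++ [false] ++ z).take i)) :
    wd (u ++ v ++ z) ≤ wd (u ++ [true] ++ v ++ [false] ++ z) := by
  have hpt : phi [true] = 2 := by simp [phi]
  have hpf : phi [false] = -2 := by simp [phi]
  have hwt : wd [true] = 2 := by simp [wd, phi]
  have hwf : wd [false] = -2 := by simp [wd, phi]
  have hu : 0 ≤ phi u := by
    have := h u.length
    rw [show u ++ [true] ++ v ++ [false] ++ z = u ++ ([true] ++ (v ++ ([false] ++ z))) from by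
      simp, List.take_left] at this
    exact this
  have huv : 0 ≤ phi u + 2 + phi v := by
    have := h (u.length + 1 + v.length)
    rw [show u ++ [true] ++ v ++ [false] ++ z = (u ++ [true] ++ v) ++ ([false] ++ z) from by
      simp,
      List.take_append,
      List.take_of_length_le (by simp; omega),
      Nat.sub_eq_zero_of_le (by simp; omega), List.take_zero, List.append_nil,
      phi_append, phi_append, hpt] at this
    linarith
  simp only [wd_append, phi_append, List.length_append, hpt, hpf, hwt, hwf,
    List.length_cons, List.length_nil]
  push_cast
  nlinarith [hu, huv, Int.natCast_nonneg v.length, Int.natCast_nonneg z.length]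
end

section
/- Let x be any word over {a,b} and n ≥ 1, and let y = α₁ⁿα₂ⁿ…αₜⁿ be obtained by repeating each letter of x = α₁…αₜ exactly n times in place. Then w(y) = n²·(w(x) − φ(x)) + (n(n+1)/2)·φ(x), where φ(a)=2, φ(b)=−2 extended additively and w is the sum of φ over all nonempty prefixes. -/
lemma phi_nil : phi [] = 0 := rfl

lemma phi_cons (c : Bool) (x : Word) :
    phi (c :: x) = (if c then (2:ℤ) else -2) + phi x := by
  simp [phi]

lemma wd_nil : wd [] = 0 := rfl

lemma wd_cons (c : Bool) (x : Word) :
    wd (c :: x) = (if c then (2:ℤ) else -2) * (x.length + 1) + wd x := by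
  unfold wd
  simp only [List.length_cons, List.take_succ_cons, phi_cons]
  rw [Finset.sum_add_distrib, Finset.sum_const, Finset.card_range]
  rw [Finset.sum_range_succ']
  simp [phi, mul_comm, add_comm, add_assoc, add_left_comm]

lemma len_flatMap (n : ℕ) (x : Word) :
    (x.flatMap (fun c => List.replicate n c)).length = n * x.length := by
  induction x with
  | nil => simp
  | cons c x ih => simp [List.flatMap_cons, ih]; ring

lemma wd_rep_append (n : ℕ) (c : Bool) (y : Word) :
    2 * wd (List.replicate n c ++ y) =
      2 * wd y + (2*(n:ℤ)*y.length + (n:ℤ)*((n:ℤ)+1)) * (if c then (2:ℤ) else -2) := by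
  induction n with
  | zero => simp
  | succ n ih =>
    rw [List.replicate_succ, List.cons_append, wd_cons, List.length_append,
      List.length_replicate]
    push_cast
    push_cast at ih
    nlinarith [ih]

lemma key (n : ℕ) (x : Word) :
    2 * wd (x.flatMap (fun c => List.replicate n c)) =
      2 * (n:ℤ)^2 * (wd x - phi x) + (n:ℤ)*((n:ℤ)+1) * phi x := by
  induction x with
  | nil => simp [wd_nil, phi_nil]
  | cons c x ih =>
    rw [List.flatMap_cons, wd_rep_append, len_flatMap, wd_cons, phi_cons]
    push_cast
    nlinarith [ih]

theorem width_repeat_general (x : Word) (n : ℕ) (hn : 1 ≤ n) :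
    wd (x.flatMap (fun c => List.replicate n c)) =
      (n : ℤ) ^ 2 * (wd x - phi x) + ((n : ℤ) * ((n : ℤ) + 1) / 2) * phi x := by
  have hT : 2 * ((n:ℤ) * ((n:ℤ)+1) / 2) = (n:ℤ) * ((n:ℤ)+1) :=
    Int.two_mul_ediv_two_of_even (Int.even_mul_succ_self _)
  have h := key n x
  have h2 : 2 * wd (x.flatMap (fun c => List.replicate n c)) =
      2 * ((n : ℤ) ^ 2 * (wd x - phi x) + ((n : ℤ) * ((n : ℤ) + 1) / 2) * phi x) := by
    linear_combination h - phi x * hT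
  linarith
end
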